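/- On the nilpotent Lie algebra 𝔫, the curvature R of the torsion connection ∇ associated with T = −2e₁₄₅ + e₁₃₆ + e₂₃₅ − e₂₄₆ is an SU(3)-instanton: for all X,Y,Z,V, (1) R(X,Y,Z,V) = R(Z,V,X,Y); (2) R(JX,JY,Z,V) = R(X,Y,Z,V); (3) Σᵢ R(eᵢ, Jeᵢ, Z, V) = 0 (sum over i = 1,…,6). -/
import Mathlib


open scoped BigOperators

noncomputable section

/-- The standard inner product on ℝ⁶. -/
def gIP (X Y : Fin 6 → ℝ) : ℝ := ∑ i, X i * Y i

/-- The standard orthonormal basis e₁,…,e₆ (0-indexed). -/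
def e (i : Fin 6) : Fin 6 → ℝ := fun j => if j = i then 1 else 0

/-- The 2-form e_{ij} (0-indexed). -/
def two (i j : Fin 6) (X Y : Fin 6 → ℝ) : ℝ := X i * Y j - X j * Y i

/-- The 3-form e_{ijk} (0-indexed). -/
def three (i j k : Fin 6) (X Y Z : Fin 6 → ℝ) : ℝ :=
  X i * (Y j * Z k - Y k * Z j) - X j * (Y i * Z k - Y k * Z i) + X k * (Y i * Z j - Y j * Z i)

/-- The 4-form e_{ijkl} (0-indexed). -/
def four (i j k l : Fin 6) (X Y Z W : Fin 6 → ℝ) : ℝ :=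
  X i * three j k l Y Z W - X j * three i k l Y Z W
    + X k * three i j l Y Z W - X l * three i j k Y Z W

/-- F = −e₁₂ − e₃₄ − e₅₆. -/
def Fform (X Y : Fin 6 → ℝ) : ℝ := -two 0 1 X Y - two 2 3 X Y - two 4 5 X Y

/-- Ψ⁺ = −e₁₃₅ + e₂₃₆ + e₁₄₆ + e₂₄₅. -/
def Psip (X Y Z : Fin 6 → ℝ) : ℝ :=
  -three 0 2 4 X Y Z + three 1 2 5 X Y Z + three 0 3 5 X Y Z + three 1 3 4 X Y Z

/-- Ψ⁻ = −e₁₃₆ − e₁₄₅ − e₂₃₅ + e₂₄₆. -/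
def Psim (X Y Z : Fin 6 → ℝ) : ℝ :=
  -three 0 2 5 X Y Z - three 0 3 4 X Y Z - three 1 2 4 X Y Z + three 1 3 5 X Y Z

/-- Φ(X,Y,Z,V) = F(X,Y)F(Z,V) + F(Y,Z)F(X,V) + F(Z,X)F(Y,V). -/
def Phi (X Y Z V : Fin 6 → ℝ) : ℝ :=
  Fform X Y * Fform Z V + Fform Y Z * Fform X V + Fform Z X * Fform Y V

/-- The orthogonal complex structure: Je₁=e₂, Je₂=−e₁, Je₃=e₄, Je₄=−e₃, Je₅=e₆, Je₆=−e₅. -/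
def Jc (X : Fin 6 → ℝ) : Fin 6 → ℝ := ![-X 1, X 0, -X 3, X 2, -X 5, X 4]

/-- Θ⁺ = e₁₃₅ − e₁₄₆ − e₂₃₆ − e₂₄₅. -/
def Thp (X Y Z : Fin 6 → ℝ) : ℝ :=
  three 0 2 4 X Y Z - three 0 3 5 X Y Z - three 1 2 5 X Y Z - three 1 3 4 X Y Z

/-- Θ⁻ = e₁₃₆ + e₁₄₅ + e₂₃₅ − e₂₄₆. -/
def Thm (X Y Z : Fin 6 → ℝ) : ℝ :=
  three 0 2 5 X Y Z + three 0 3 4 X Y Z + three 1 2 4 X Y Z - three 1 3 5 X Y Z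

/-- Nijenhuis tensor N(X,Y) = [JX,JY] − [X,Y] − J[JX,Y] − J[X,JY] for a bracket `br`. -/
def Nij (br : (Fin 6 → ℝ) → (Fin 6 → ℝ) → (Fin 6 → ℝ)) (X Y : Fin 6 → ℝ) : Fin 6 → ℝ :=
  br (Jc X) (Jc Y) - br X Y - Jc (br (Jc X) Y) - Jc (br X (Jc Y))

/-- Chevalley–Eilenberg differential of a 2-form. -/
def d2 (br : (Fin 6 → ℝ) → (Fin 6 → ℝ) → (Fin 6 → ℝ))
    (α : (Fin 6 → ℝ) → (Fin 6 → ℝ) → ℝ) (X Y Z : Fin 6 → ℝ) : ℝ :=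
  -α (br X Y) Z + α (br X Z) Y - α (br Y Z) X

/-- Chevalley–Eilenberg differential of a 3-form. -/
def d3 (br : (Fin 6 → ℝ) → (Fin 6 → ℝ) → (Fin 6 → ℝ))
    (α : (Fin 6 → ℝ) → (Fin 6 → ℝ) → (Fin 6 → ℝ) → ℝ) (X Y Z W : Fin 6 → ℝ) : ℝ :=
  -α (br X Y) Z W + α (br X Z) Y W - α (br X W) Y Z
    - α (br Y Z) X W + α (br Y W) X Z - α (br Z W) X Y

/-- The torsion connection ∇ associated with a bracket `br` and a 3-form `T`:
g(∇_X Y, Z) = ½( g([X,Y],Z) − g([Y,Z],X) + g([Z,X],Y) + T(X,Y,Z) ). -/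
def nab (br : (Fin 6 → ℝ) → (Fin 6 → ℝ) → (Fin 6 → ℝ))
    (T : (Fin 6 → ℝ) → (Fin 6 → ℝ) → (Fin 6 → ℝ) → ℝ)
    (X Y : Fin 6 → ℝ) : Fin 6 → ℝ :=
  fun m => (1/2) * (gIP (br X Y) (e m) - gIP (br Y (e m)) X + gIP (br (e m) X) Y + T X Y (e m))

/-- The covariant derivative of a 3-form α:
(∇_X α)(Y,Z,V) = −α(∇_X Y,Z,V) − α(Y,∇_X Z,V) − α(Y,Z,∇_X V). -/
def nabForm3 (br : (Fin 6 → ℝ) → (Fin 6 → ℝ) → (Fin 6 → ℝ))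
    (T α : (Fin 6 → ℝ) → (Fin 6 → ℝ) → (Fin 6 → ℝ) → ℝ)
    (X Y Z V : Fin 6 → ℝ) : ℝ :=
  -α (nab br T X Y) Z V - α Y (nab br T X Z) V - α Y Z (nab br T X V)

/-- Curvature R(X,Y)Z = ∇_X∇_Y Z − ∇_Y∇_X Z − ∇_{[X,Y]}Z. -/
def Rmap (br : (Fin 6 → ℝ) → (Fin 6 → ℝ) → (Fin 6 → ℝ))
    (T : (Fin 6 → ℝ) → (Fin 6 → ℝ) → (Fin 6 → ℝ) → ℝ)
    (X Y Z : Fin 6 → ℝ) : Fin 6 → ℝ :=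
  nab br T X (nab br T Y Z) - nab br T Y (nab br T X Z) - nab br T (br X Y) Z

/-- R(X,Y,Z,V) = g(R(X,Y)Z,V). -/
def R4 (br : (Fin 6 → ℝ) → (Fin 6 → ℝ) → (Fin 6 → ℝ))
    (T : (Fin 6 → ℝ) → (Fin 6 → ℝ) → (Fin 6 → ℝ) → ℝ)
    (X Y Z V : Fin 6 → ℝ) : ℝ :=
  gIP (Rmap br T X Y Z) V

/-- The Lie bracket of the nilpotent Lie algebra 𝔫: [e₃,e₆]=−e₁, [e₂,e₆]=−e₄, [e₂,e₃]=−e₅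
(bilinear extension). -/
def brNil (X Y : Fin 6 → ℝ) : Fin 6 → ℝ :=
  (-two 2 5 X Y) • e 0 + (-two 1 5 X Y) • e 3 + (-two 1 2 X Y) • e 4

/-- The torsion 3-form T = −2e₁₄₅ + e₁₃₆ + e₂₃₅ − e₂₄₆ on 𝔫. -/
def TNil (X Y Z : Fin 6 → ℝ) : ℝ :=
  -2 * three 0 3 4 X Y Z + three 0 2 5 X Y Z + three 1 2 4 X Y Z - three 1 3 5 X Y Z



lemma Jc0 (X : Fin 6 → ℝ) : Jc X 0 = -X 1 := rfl
lemma Jc1 (X : Fin 6 → ℝ) : Jc X 1 = X 0 := rfl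
lemma Jc2 (X : Fin 6 → ℝ) : Jc X 2 = -X 3 := rfl
lemma Jc3 (X : Fin 6 → ℝ) : Jc X 3 = X 2 := rfl
lemma Jc4 (X : Fin 6 → ℝ) : Jc X 4 = -X 5 := rfl
lemma Jc5 (X : Fin 6 → ℝ) : Jc X 5 = X 4 := rfl

def nabN (X Y : Fin 6 → ℝ) : Fin 6 → ℝ
  | 0 => -X 3*Y 4 + X 4*Y 3
  | 1 => -X 3*Y 5 - X 4*Y 2
  | 2 => -X 0*Y 5 + X 4*Y 1
  | 3 => X 0*Y 4 - X 4*Y 0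
  | 4 => -X 0*Y 3 + X 3*Y 0
  | 5 => X 0*Y 2 + X 3*Y 1

lemma nab_eq (X Y : Fin 6 → ℝ) : nab brNil TNil X Y = nabN X Y := by
  funext m
  fin_cases m <;>
    simp [nab, brNil, TNil, gIP, two, three, e, nabN, Fin.sum_univ_six] <;> ring

def RP (X Y Z V : Fin 6 → ℝ) : ℝ :=
  -V 0*X 0*Y 3*Z 3 + -V 0*X 0*Y 4*Z 4 + V 0*X 1*Y 2*Z 3 + -V 0*X 1*Y 5*Z 4 + -V 0*X 2*Y 1*Z 3 + V 0*X 3*Y 0*Z 3 + V 0*X 4*Y 0*Z 4 + V 0*X 5*Y 1*Z 4 + V 1*X 0*Y 3*Z 2 + -V 1*X 0*Y 4*Z 5 + -V 1*X 1*Y 2*Z 2 + -V 1*X 1*Y 5*Z 5 + V 1*X 2*Y 1*Z 2 + -V 1*X 3*Y 0*Z 2 + V 1*X 4*Y 0*Z 5 + V 1*X 5*Y 1*Z 5 + -V 2*X 0*Y 3*Z 1 + V 2*X 1*Y 2*Z 1 + -V 2*X 2*Y 1*Z 1 + -V 2*X 2*Y 5*Z 5 + V 2*X 3*Y 0*Z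 1 + V 2*X 3*Y 4*Z 5 + -V 2*X 4*Y 3*Z 5 + V 2*X 5*Y 2*Z 5 + V 3*X 0*Y 3*Z 0 + -V 3*X 1*Y 2*Z 0 + V 3*X 2*Y 1*Z 0 + V 3*X 2*Y 5*Z 4 + -V 3*X 3*Y 0*Z 0 + -V 3*X 3*Y 4*Z 4 + V 3*X 4*Y 3*Z 4 + -V 3*X 5*Y 2*Z 4 + V 4*X 0*Y 4*Z 0 + V 4*X 1*Y 5*Z 0 + -V 4*X 2*Y 5*Z 3 + V 4*X 3*Y 4*Z 3 + -V 4*X 4*Y 0*Z 0 + -V 4*X 4*Y 3*Z 3 + -V 4*X 5*Y 1*Z 0 + V 4*X 5*Y 2*Z 3 + V 5*X 0*Y 4*Z 1 + V 5*X 1*Y 5*Z 1 + V 5*X 2*Y 5*Z 2 + -V 5*X 3*Y 4*Z 2 + -V 5*X 4*Y 0*Z 1 + V 5*X 4*Y 3*Z 2 + -V 5*X 5*Y 1*Z 1 + -V 5*X 5*Y 2*Z 2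

set_option maxHeartbeats 1000000 in
lemma R4_eq (X Y Z V : Fin 6 → ℝ) : R4 brNil TNil X Y Z V = RP X Y Z V := by
  simp only [R4, Rmap, nab_eq, RP, gIP, Fin.sum_univ_six, Pi.sub_apply]
  simp [nabN, brNil, two, e]
  ring

/-- on 𝔫, the curvature of the torsion connection is an SU(3)-instanton. -/
theorem stmt19 :
    (∀ X Y Z V : Fin 6 → ℝ, R4 brNil TNil X Y Z V = R4 brNil TNil Z V X Y) ∧
    (∀ X Y Z V : Fin 6 → ℝ, R4 brNil TNil (Jc X) (Jc Y) Z V = R4 brNil TNil X Y Z V) ∧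
    (∀ Z V : Fin 6 → ℝ, ∑ i, R4 brNil TNil (e i) (Jc (e i)) Z V = 0) := by
  refine ⟨fun X Y Z V => ?_, fun X Y Z V => ?_, fun Z V => ?_⟩
  · simp only [R4_eq, RP]; ring
  · simp only [R4_eq, RP, Jc0, Jc1, Jc2, Jc3, Jc4, Jc5]; ring
  · simp only [Fin.sum_univ_six, R4_eq, RP, Jc0, Jc1, Jc2, Jc3, Jc4, Jc5, e,
      Fin.reduceEq, reduceIte, reduceCtorEq]
    ring
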